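/- Fix n ≥ 1, c > 0, a constant M > 0, and masses m₁, …, mₙ > 0. On the phase space ((ℝ³)ⁿ × (ℝ³)ⁿ) with Poisson bracket {F, G} := Σᵢ ( ⟨∇_{pᵢ}F, ∇_{xᵢ}G⟩ − ⟨∇_{xᵢ}F, ∇_{pᵢ}G⟩ ), let H₁, …, Hₙ be differentiable real-valued functions, H := Σᵢ Hᵢ, K := H²/(2 M c²) + M c²/2, and Kᵢ := Hᵢ²/(2 mᵢ c²) + mᵢ c²/2. Then at every phase-space point where Hᵢ ≠ 0 for all i, and for every differentiable W: {K, W} = Σᵢ ( H mᵢ / (M Hᵢ) ) · {Kᵢ, W}. -/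

import Mathlib

/-- The Poisson bracket `{F, G} = Σᵢ(⟨∇_{pᵢ}F, ∇_{xᵢ}G⟩ − ⟨∇_{xᵢ}F, ∇_{pᵢ}G⟩)` on the
`n`-particle phase space `(ℝ³)ⁿ × (ℝ³)ⁿ`, via directional derivatives along the
standard basis. -/
noncomputable def pbracketN (n : ℕ)
    (F G : (Fin n → EuclideanSpace ℝ (Fin 3)) × (Fin n → EuclideanSpace ℝ (Fin 3)) → ℝ)
    (z : (Fin n → EuclideanSpace ℝ (Fin 3)) × (Fin n → EuclideanSpace ℝ (Fin 3))) : ℝ :=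
  ∑ i : Fin n, ∑ j : Fin 3,
    (fderiv ℝ F z (0, Pi.single i (EuclideanSpace.single j 1))
        * fderiv ℝ G z (Pi.single i (EuclideanSpace.single j 1), 0)
      - fderiv ℝ F z (Pi.single i (EuclideanSpace.single j 1), 0)
        * fderiv ℝ G z (0, Pi.single i (EuclideanSpace.single j 1)))


section Stmt18Helpers

variable {n : ℕ}
  {F W : (Fin n → EuclideanSpace ℝ (Fin 3)) × (Fin n → EuclideanSpace ℝ (Fin 3)) → ℝ}
  {z : (Fin n → EuclideanSpace ℝ (Fin 3)) × (Fin n → EuclideanSpace ℝ (Fin 3))}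

lemma pbracket_smul (g : (Fin n → EuclideanSpace ℝ (Fin 3)) × (Fin n → EuclideanSpace ℝ (Fin 3)) → ℝ)
    (κ : ℝ) (hF : fderiv ℝ F z = κ • fderiv ℝ g z) :
    pbracketN n F W z = κ * pbracketN n g W z := by
  simp only [pbracketN, hF, ContinuousLinearMap.smul_apply, smul_eq_mul, Finset.mul_sum]
  exact Finset.sum_congr rfl fun i _ => Finset.sum_congr rfl fun j _ => by ring

lemma triple_swap (X : Fin n → Fin 3 → Fin n → ℝ) :
    (∑ i, ∑ j, ∑ k, X i j k) = ∑ k, ∑ i, ∑ j, X i j k :=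
  (Finset.sum_congr rfl fun _ _ => Finset.sum_comm).trans Finset.sum_comm

lemma pbracket_sum (g : Fin n → (Fin n → EuclideanSpace ℝ (Fin 3)) × (Fin n → EuclideanSpace ℝ (Fin 3)) → ℝ)
    (hF : fderiv ℝ F z = ∑ k, fderiv ℝ (g k) z) :
    pbracketN n F W z = ∑ k, pbracketN n (g k) W z := by
  simp only [pbracketN, hF, ContinuousLinearMap.sum_apply, Finset.sum_mul,
    ← Finset.sum_sub_distrib]
  exact triple_swap _

lemma fderiv_sq_aff (f : (Fin n → EuclideanSpace ℝ (Fin 3)) × (Fin n → EuclideanSpace ℝ (Fin 3)) → ℝ)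
    (hf : DifferentiableAt ℝ f z) (a b : ℝ) (ha : a ≠ 0) (hb : b ≠ 0) :
    fderiv ℝ (fun x => f x ^ 2 / (2 * a * b ^ 2) + a * b ^ 2 / 2) z
      = (f z / (a * b ^ 2)) • fderiv ℝ f z := by
  have h1 : (fun x => f x ^ 2 / (2 * a * b ^ 2) + a * b ^ 2 / 2)
      = fun x => (2 * a * b ^ 2)⁻¹ * (f x * f x) + a * b ^ 2 / 2 := by
    funext x; field_simp
  rw [h1]
  have h3 := ((hf.hasFDerivAt.mul hf.hasFDerivAt).const_mul ((2 * a * b ^ 2)⁻¹)).add_const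
    (a * b ^ 2 / 2)
  have heq : (2 * a * b ^ 2)⁻¹ • (f z • fderiv ℝ f z + f z • fderiv ℝ f z)
      = (f z / (a * b ^ 2)) • fderiv ℝ f z := by
    rw [smul_add, smul_smul, ← add_smul]
    congr 1
    field_simp
    ring
  rw [heq] at h3
  exact h3.fderiv

end Stmt18Helpers

/-- Relation between the global and local proper-time dynamics (equations
(20)–(21) of the paper): with `K := H²/(2Mc²) + Mc²/2`, `Kᵢ := Hᵢ²/(2mᵢc²) + mᵢc²/2` and
`H := Σᵢ Hᵢ`, at every point where all `Hᵢ ≠ 0`, for every differentiable `W`,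
`{K, W} = Σᵢ (Hmᵢ/(MHᵢ))·{Kᵢ, W}`. -/
theorem stmt18 (n : ℕ) (hn : 1 ≤ n) (c : ℝ) (hc : 0 < c) (M : ℝ) (hM : 0 < M)
    (m : Fin n → ℝ) (hm : ∀ i, 0 < m i)
    (Hi : Fin n →
      ((Fin n → EuclideanSpace ℝ (Fin 3)) × (Fin n → EuclideanSpace ℝ (Fin 3))) → ℝ)
    (hHidiff : ∀ i, Differentiable ℝ (Hi i))
    (H : ((Fin n → EuclideanSpace ℝ (Fin 3)) × (Fin n → EuclideanSpace ℝ (Fin 3))) → ℝ)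
    (hH : H = fun z => ∑ i, Hi i z)
    (K : ((Fin n → EuclideanSpace ℝ (Fin 3)) × (Fin n → EuclideanSpace ℝ (Fin 3))) → ℝ)
    (hK : K = fun z => (H z) ^ 2 / (2 * M * c ^ 2) + M * c ^ 2 / 2)
    (Ki : Fin n →
      ((Fin n → EuclideanSpace ℝ (Fin 3)) × (Fin n → EuclideanSpace ℝ (Fin 3))) → ℝ)
    (hKi : Ki = fun i z => (Hi i z) ^ 2 / (2 * m i * c ^ 2) + m i * c ^ 2 / 2) :
    ∀ z, (∀ i, Hi i z ≠ 0) →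
      ∀ W : ((Fin n → EuclideanSpace ℝ (Fin 3)) ×
          (Fin n → EuclideanSpace ℝ (Fin 3))) → ℝ,
        Differentiable ℝ W →
        pbracketN n K W z
          = ∑ i, (H z * m i / (M * Hi i z)) * pbracketN n (Ki i) W z := by
  subst hH hK hKi
  intro z hz W hW
  have hc0 : c ≠ 0 := hc.ne'
  have hM0 : M ≠ 0 := hM.ne'
  have hdH : DifferentiableAt ℝ (fun z => ∑ i, Hi i z) z :=
    DifferentiableAt.fun_sum fun i _ => (hHidiff i) z
  have hHsum : fderiv ℝ (fun z => ∑ i, Hi i z) z = ∑ k, fderiv ℝ (Hi k) z :=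
    (HasFDerivAt.fun_sum fun i _ => ((hHidiff i) z).hasFDerivAt).fderiv
  have hKd := fderiv_sq_aff (fun z => ∑ i, Hi i z) hdH M c hM0 hc0
  have L1 : pbracketN n (fun z => (∑ i, Hi i z) ^ 2 / (2 * M * c ^ 2) + M * c ^ 2 / 2) W z
      = ((∑ i, Hi i z) / (M * c ^ 2)) * ∑ k, pbracketN n (Hi k) W z := by
    rw [pbracket_smul (fun z => ∑ i, Hi i z) _ hKd, pbracket_sum Hi hHsum]
  have L2 : ∀ i, pbracketN n
        (fun z => (Hi i z) ^ 2 / (2 * m i * c ^ 2) + m i * c ^ 2 / 2) W z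
      = (Hi i z / (m i * c ^ 2)) * pbracketN n (Hi i) W z := fun i =>
    pbracket_smul (Hi i) _ (fderiv_sq_aff (Hi i) ((hHidiff i) z) (m i) c (hm i).ne' hc0)
  simp only []
  rw [L1, Finset.mul_sum]
  refine Finset.sum_congr rfl fun i _ => ?_
  rw [L2 i]
  have hmi : m i ≠ 0 := (hm i).ne'
  have hHi : Hi i z ≠ 0 := hz i
  field_simp
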